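/- Let f : F_2^d → F_2 be a Boolean function of d variables and let n ≥ d. Define f* : F_2^n → F_2 by f*(x) = ⊕_{i=1}^{n−d+1} f(x_i, …, x_{i+d−1}) (the CA-XOR construction). Then the algebraic degree of f* equals the algebraic degree of f. -/

import Mathlib

/-- The indicator vector (in `F_2^m`) of a finite set of coordinates. -/
def toVec {m : ℕ} (S : Finset (Fin m)) : Fin m → ZMod 2 := fun i => if i ∈ S then 1 else 0

/-- The ANF coefficient of a Boolean function `f` at the monomial with variable set `S`,
obtained via the Möbius transform. -/
def anf {m : ℕ} (f : (Fin m → ZMod 2) → ZMod 2) (S : Finset (Fin m)) : ZMod 2 :=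
  ∑ T ∈ S.powerset, f (toVec T)

/-- The algebraic degree of a Boolean function: the largest size of a monomial occurring
with nonzero coefficient in its algebraic normal form. -/
def degree {m : ℕ} (f : (Fin m → ZMod 2) → ZMod 2) : ℕ :=
  (Finset.univ.filter fun S : Finset (Fin m) => anf f S ≠ 0).sup Finset.card

/-- The CA-XOR construction: `f*(x) = ⊕_{i=1}^{n-d+1} f(x_i, …, x_{i+d-1})`. -/
def caXor {d n : ℕ} (h : d ≤ n) (f : (Fin d → ZMod 2) → ZMod 2) :
    (Fin n → ZMod 2) → ZMod 2 := fun x =>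
  ∑ i : Fin (n - d + 1),
    f (fun j => x ⟨i.val + j.val, by have := i.isLt; have := j.isLt; omega⟩)

namespace CAProof

variable {d n : ℕ}
def emb (h : d ≤ n) (i : Fin (n - d + 1)) : Fin d ↪ Fin n where
  toFun j := ⟨i.val + j.val, by have := i.isLt; have := j.isLt; omega⟩
  inj' a b hab := by
    apply Fin.ext
    have := congrArg Fin.val hab
    simpa using this
lemma toVec_comp (h : d ≤ n) (i : Fin (n - d + 1)) (T : Finset (Fin n)) :
    (fun j : Fin d => toVec T (emb h i j)) =
      toVec (T.preimage (emb h i) (emb h i).injective.injOn) := by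
  funext j
  simp [toVec, Finset.mem_preimage]

lemma anf_shift (h : d ≤ n) (f : (Fin d → ZMod 2) → ZMod 2) (i : Fin (n - d + 1))
    (S : Finset (Fin n)) :
    anf (fun x => f (fun j => x (emb h i j))) S =
      if S ⊆ Finset.univ.map (emb h i)
      then anf f (S.preimage (emb h i) (emb h i).injective.injOn) else 0 := by
  unfold anf
  simp only [toVec_comp h i]
  split_ifs with hsub
  · refine Finset.sum_nbij' (fun T => T.preimage (emb h i) (emb h i).injective.injOn)
      (fun T' => T'.map (emb h i)) ?_ ?_ ?_ ?_ ?_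
    · intro T hT
      rw [Finset.mem_powerset] at *
      intro a ha
      rw [Finset.mem_preimage] at *
      exact hT ha
    · intro T' hT'
      rw [Finset.mem_powerset] at *
      intro a ha
      rw [Finset.mem_map] at ha
      obtain ⟨b, hb, rfl⟩ := ha
      exact Finset.mem_preimage.mp (hT' hb)
    · intro T hT
      rw [Finset.mem_powerset] at hT
      ext a
      simp only [Finset.mem_map, Finset.mem_preimage]
      constructor
      · rintro ⟨b, hb, rfl⟩; exact hb
      · intro ha
        obtain ⟨b, _, rfl⟩ := Finset.mem_map.mp (hsub (hT ha))
        exact ⟨b, ha, rfl⟩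
    · intro T' hT'
      exact Finset.preimage_map _ _
    · intro T hT; rfl
  · rw [Finset.not_subset] at hsub
    obtain ⟨a, haS, haR⟩ := hsub
    have hrw : S = insert a (S.erase a) := (Finset.insert_erase haS).symm
    rw [hrw, Finset.sum_powerset_insert (Finset.notMem_erase a _)]
    have : ∀ T : Finset (Fin n),
        (insert a T).preimage (emb h i) (emb h i).injective.injOn
          = T.preimage (emb h i) (emb h i).injective.injOn := by
      intro T
      ext b
      simp only [Finset.mem_preimage, Finset.mem_insert]
      constructor
      · rintro (hb | hb)
        · exact absurd (Finset.mem_map_of_mem _ (Finset.mem_univ b)) (hb ▸ haR)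
        · exact hb
      · exact Or.inr
    simp only [this]
    exact CharTwo.add_self_eq_zero _

lemma anf_caXor (h : d ≤ n) (f : (Fin d → ZMod 2) → ZMod 2) (S : Finset (Fin n)) :
    anf (fun x => ∑ i : Fin (n - d + 1), f (fun j => x (emb h i j))) S
      = ∑ i : Fin (n - d + 1),
      (if S ⊆ Finset.univ.map (emb h i)
       then anf f (S.preimage (emb h i) (emb h i).injective.injOn) else 0) := by
  unfold anf
  rw [Finset.sum_comm]
  refine Finset.sum_congr rfl fun i _ => ?_
  exact anf_shift h f i S

lemma map_preimage_eq (h : d ≤ n) (i : Fin (n - d + 1)) {S : Finset (Fin n)}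
    (hsub : S ⊆ Finset.univ.map (emb h i)) :
    (S.preimage (emb h i) (emb h i).injective.injOn).map (emb h i) = S := by
  ext a
  simp only [Finset.mem_map, Finset.mem_preimage]
  constructor
  · rintro ⟨b, hb, rfl⟩; exact hb
  · intro ha
    obtain ⟨b, _, rfl⟩ := Finset.mem_map.mp (hsub ha)
    exact ⟨b, ha, rfl⟩

lemma card_le_degree {m : ℕ} {f : (Fin m → ZMod 2) → ZMod 2} {S : Finset (Fin m)}
    (hS : anf f S ≠ 0) : S.card ≤ (Finset.univ.filter fun S : Finset (Fin m) => anf f S ≠ 0).sup Finset.card := by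
  apply Finset.le_sup
  simp [hS]

theorem stmt0' {d n : ℕ} (h : d ≤ n) (f : (Fin d → ZMod 2) → ZMod 2) :
    (Finset.univ.filter fun S : Finset (Fin n) =>
        anf (fun x => ∑ i : Fin (n - d + 1), f (fun j => x (emb h i j))) S ≠ 0).sup Finset.card
      = (Finset.univ.filter fun S : Finset (Fin d) => anf f S ≠ 0).sup Finset.card := by
  set D := (Finset.univ.filter fun S : Finset (Fin d) => anf f S ≠ 0).sup Finset.card with hD
  apply le_antisymm
  · -- upper bound
    apply Finset.sup_le
    intro S hS
    rw [Finset.mem_filter] at hS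
    have hne := hS.2
    rw [anf_caXor] at hne
    obtain ⟨i, _, hi⟩ := Finset.exists_ne_zero_of_sum_ne_zero hne
    split_ifs at hi with hsub
    · have hcard : (S.preimage (emb h i) (emb h i).injective.injOn).card = S.card := by
        have := congrArg Finset.card (map_preimage_eq h i hsub)
        rwa [Finset.card_map] at this
      exact le_of_eq_of_le hcard.symm (card_le_degree hi)
    · exact absurd rfl hi
  · -- lower bound
    rcases Nat.eq_zero_or_pos D with hD0 | hDpos
    · rw [hD0]; exact Nat.zero_le _
    -- the filter set on f is nonempty
    have hAne : (Finset.univ.filter fun S : Finset (Fin d) => anf f S ≠ 0).Nonempty := by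
      rw [Finset.nonempty_iff_ne_empty]
      intro hempty
      rw [hD, hempty, Finset.sup_empty] at hDpos
      exact absurd rfl (Nat.pos_iff_ne_zero.mp hDpos)
    obtain ⟨S₁, hS₁mem, hS₁sup⟩ := Finset.exists_mem_eq_sup _ hAne Finset.card
    -- the set of max-degree monomials
    set A := Finset.univ.filter
      (fun S : Finset (Fin d) => anf f S ≠ 0 ∧ S.card = D) with hA
    have hAne' : A.Nonempty := by
      refine ⟨S₁, ?_⟩
      rw [hA, Finset.mem_filter]
      rw [Finset.mem_filter] at hS₁mem
      exact ⟨Finset.mem_univ _, hS₁mem.2, hS₁sup.symm⟩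
    set key : Finset (Fin d) → ℕ :=
      fun S => if hS : S.Nonempty then (S.min' hS : ℕ) else 0 with hkey
    obtain ⟨S₀, hS₀A, hS₀min⟩ := Finset.exists_min_image A key hAne'
    rw [hA, Finset.mem_filter] at hS₀A
    obtain ⟨-, hS₀anf, hS₀card⟩ := hS₀A
    have hS₀ne : S₀.Nonempty := Finset.card_pos.mp (hS₀card ▸ hDpos)
    set i0 : Fin (n - d + 1) := ⟨0, Nat.succ_pos _⟩ with hi0
    set S : Finset (Fin n) := S₀.map (emb h i0) with hSdef
    have hanf : anf (fun x => ∑ i : Fin (n - d + 1), f (fun j => x (emb h i j))) S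
        = anf f S₀ := by
      rw [anf_caXor]
      rw [Finset.sum_eq_single_of_mem i0 (Finset.mem_univ i0)]
      · rw [if_pos (Finset.map_subset_map.mpr (Finset.subset_univ _)), Finset.preimage_map]
      · intro i _ hine
        split_ifs with hsub
        · -- show the preimage has nonzero anf is impossible
          by_contra hne0
          set P := S.preimage (emb h i) (emb h i).injective.injOn with hP
          have hPcard : P.card = D := by
            rw [hP, ← hS₀card, ← Finset.card_map (f := emb h i), map_preimage_eq h i hsub,
              hSdef, Finset.card_map]
          have hPA : P ∈ A := by
            rw [hA, Finset.mem_filter]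
            exact ⟨Finset.mem_univ _, hne0, hPcard⟩
          -- i.val ≥ 1
          have hi1 : 1 ≤ i.val := by
            rcases Nat.eq_zero_or_pos i.val with h0 | h1
            · exact absurd (Fin.ext h0) hine
            · exact h1
          set m := S₀.min' hS₀ne with hm
          have hmS : emb h i0 m ∈ S := Finset.mem_map_of_mem _ (S₀.min'_mem hS₀ne)
          obtain ⟨b, -, hb⟩ := Finset.mem_map.mp (hsub hmS)
          have hbval : i.val + b.val = m.val := by
            have := congrArg Fin.val hb
            exact (show i.val + b.val = 0 + m.val from this).trans (Nat.zero_add _)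
          have hbP : b ∈ P := by
            rw [hP, Finset.mem_preimage, hb]
            exact hmS
          have hPne : P.Nonempty := ⟨b, hbP⟩
          have hkeyP : key P ≤ b.val := by
            rw [hkey]
            simp only [dif_pos hPne]
            exact Finset.min'_le _ _ hbP
          have hkeyS₀ : key S₀ = m.val := by
            rw [hkey]; simp only [dif_pos hS₀ne]; rfl
          have := hS₀min P hPA
          omega
        · rfl
    have hScard : S.card = D := by rw [hSdef, Finset.card_map, hS₀card]
    calc D = S.card := hScard.symm
      _ ≤ _ := card_le_degree (hanf ▸ hS₀anf)

end CAProof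

open CAProof in
/-- The CA-XOR construction preserves the algebraic degree of the local rule. -/
theorem stmt0 {d n : ℕ} (h : d ≤ n) (f : (Fin d → ZMod 2) → ZMod 2) :
    degree (caXor h f) = degree f :=
  stmt0' h f
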